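/- For λ ∈ (0, 1/2], the function t ↦ exp(−3λt²/(2π²)) − √((1−λ) + λ·cos t) has at most one zero in the interval (0, π]. -/

import Mathlib

open Real

/-- `x - x^3/6 ≤ sin x` for `x ≥ 0`. -/
lemma aux_sin_ge {x : ℝ} (hx : 0 ≤ x) : x - x ^ 3 / 6 ≤ Real.sin x := by
  have hmono : MonotoneOn (fun x : ℝ => Real.sin x - x + x ^ 3 / 6) (Set.Ici 0) := by
    apply monotoneOn_of_deriv_nonneg (convex_Ici 0)
    · exact (((Real.continuous_sin.sub continuous_id).add
        ((continuous_pow 3).div_const 6)).continuousOn)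
    · intro y hy
      exact (((Real.hasDerivAt_sin y).sub (hasDerivAt_id y)).add
        ((hasDerivAt_pow 3 y).div_const 6)).differentiableAt.differentiableWithinAt
    · intro y hy
      have hd : deriv (fun x : ℝ => Real.sin x - x + x ^ 3 / 6) y
          = Real.cos y - 1 + 3 * y ^ 2 / 6 := by
        have := (((Real.hasDerivAt_sin y).sub (hasDerivAt_id y)).add
          ((hasDerivAt_pow 3 y).div_const 6)).deriv
        simp at this
        exact this
      rw [hd]
      nlinarith [Real.one_sub_sq_div_two_le_cos (x := y)]
  have h0 : (0:ℝ) ∈ Set.Ici (0:ℝ) := Set.self_mem_Ici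
  have := hmono h0 (Set.mem_Ici.2 hx) hx
  simp only [Real.sin_zero] at this
  nlinarith

/-- `cos x ≤ 1 - x^2/2 + x^4/24` for `x ≥ 0`. -/
lemma aux_cos_le {x : ℝ} (hx : 0 ≤ x) : Real.cos x ≤ 1 - x ^ 2 / 2 + x ^ 4 / 24 := by
  have hmono : MonotoneOn (fun x : ℝ => 1 - x ^ 2 / 2 + x ^ 4 / 24 - Real.cos x)
      (Set.Ici 0) := by
    apply monotoneOn_of_deriv_nonneg (convex_Ici 0)
    · exact (((continuous_const.sub ((continuous_pow 2).div_const 2)).add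
        ((continuous_pow 4).div_const 24)).sub Real.continuous_cos).continuousOn
    · intro y hy
      exact ((((hasDerivAt_const y (1:ℝ)).sub ((hasDerivAt_pow 2 y).div_const 2)).add
        ((hasDerivAt_pow 4 y).div_const 24)).sub
        (Real.hasDerivAt_cos y)).differentiableAt.differentiableWithinAt
    · intro y hy
      have hy0 : (0:ℝ) ≤ y := by
        have := interior_subset hy
        exact this
      have hd : deriv (fun x : ℝ => 1 - x ^ 2 / 2 + x ^ 4 / 24 - Real.cos x) y
          = (0 - 2 * y ^ 1 / 2 + 4 * y ^ 3 / 24) - (-Real.sin y) := by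
        exact ((((hasDerivAt_const y (1:ℝ)).sub ((hasDerivAt_pow 2 y).div_const 2)).add
          ((hasDerivAt_pow 4 y).div_const 24)).sub (Real.hasDerivAt_cos y)).deriv
      rw [hd]
      have := aux_sin_ge hy0
      nlinarith
  have h0 : (0:ℝ) ∈ Set.Ici (0:ℝ) := Set.self_mem_Ici
  have := hmono h0 (Set.mem_Ici.2 hx) hx
  simp only [Real.cos_zero] at this
  nlinarith

/-- Key inequality: `t cos t ≤ sin t (1 - t²/3)` on `(0, π)`. -/
lemma aux_trig {t : ℝ} (h0 : 0 < t) (hpi : t < π) :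
    t * Real.cos t ≤ Real.sin t * (1 - t ^ 2 / 3) := by
  rcases le_or_gt t (Real.sqrt 3) with hc | hc
  · -- small t : use series bounds
    have ht2 : t ^ 2 ≤ 3 := by
      have := Real.sq_sqrt (by norm_num : (3:ℝ) ≥ 0)
      nlinarith [Real.sqrt_nonneg 3]
    have h1 := aux_sin_ge h0.le
    have h2 := aux_cos_le h0.le
    nlinarith [mul_nonneg (sub_nonneg.2 h1) (by nlinarith : (0:ℝ) ≤ 1 - t ^ 2 / 3),
      mul_le_mul_of_nonneg_left h2 h0.le, pow_pos h0 5]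
  · -- t near π : reflect
    set s : ℝ := π - t with hs
    have hs0 : 0 < s := by simp [hs]; linarith
    have hsin : Real.sin t = Real.sin s := by
      rw [hs, Real.sin_pi_sub]
    have hcos : Real.cos t = -Real.cos s := by
      rw [hs, Real.cos_pi_sub]; ring
    have hsle : Real.sin s ≤ s := Real.sin_le hs0.le
    have hcge : 1 - s ^ 2 / 2 ≤ Real.cos s := Real.one_sub_sq_div_two_le_cos
    -- s ≤ π - √3 < 1.4096
    have hsqrt3 : (1.732:ℝ) < Real.sqrt 3 := by
      rw [show (1.732:ℝ) = Real.sqrt (1.732^2) by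
        rw [Real.sqrt_sq]; norm_num]
      apply Real.sqrt_lt_sqrt <;> norm_num
    have hπu : π < 3.1416 := by
      have := Real.pi_lt_d6; linarith
    have hπl : (3.1415:ℝ) < π := by
      have := Real.pi_gt_d6; linarith
    have hsmax : s < 1.4096 := by
      have : s < π - 1.732 := by rw [hs]; linarith
      linarith
    have htneg : 1 - t ^ 2 / 3 < 0 := by
      have hsq := Real.sq_sqrt (show (0:ℝ) ≤ 3 by norm_num)
      have h3 : (3:ℝ) < t ^ 2 := by
        nlinarith [Real.sqrt_nonneg 3, mul_pos (sub_pos.2 hc) (sub_pos.2 hc),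
          mul_self_nonneg (t - Real.sqrt 3)]
      linarith
    have hsinpos : 0 < Real.sin t := Real.sin_pos_of_pos_of_lt_pi h0 hpi
    -- sin t * (1 - t²/3) ≥ s * (1 - t²/3)  since sin t ≤ s and coeff < 0
    have e1 : s * (1 - t ^ 2 / 3) ≤ Real.sin t * (1 - t ^ 2 / 3) := by
      rw [hsin]
      nlinarith
    -- t * cos t ≤ t * (-1 + s²/2)
    have e2 : t * Real.cos t ≤ t * (-1 + s ^ 2 / 2) := by
      rw [hcos]
      nlinarith
    -- polynomial inequality: t (-1 + s²/2) ≤ s (1 - t²/3) with t = π - s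
    have e3 : t * (-1 + s ^ 2 / 2) ≤ s * (1 - t ^ 2 / 3) := by
      have hts : t = π - s := by rw [hs]; ring
      rw [hts]
      nlinarith [sq_nonneg (s - 1.4096), mul_nonneg (sq_nonneg (s - 1.4096)) hs0.le,
        hs0.le, sq_nonneg s, mul_nonneg hs0.le hs0.le]
    linarith

theorem at_most_one_zero (lam : ℝ) (hlam0 : 0 < lam) (hlam : lam ≤ 1 / 2) :
    Set.Subsingleton {t ∈ Set.Ioc (0:ℝ) π |
      Real.exp (-(3 * lam * t ^ 2) / (2 * π ^ 2)) -
        Real.sqrt ((1 - lam) + lam * Real.cos t) = 0} := by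
  have hπ : (0:ℝ) < π := Real.pi_pos
  have hπ2 : (0:ℝ) < π ^ 2 := by positivity
  -- the smooth comparison function
  set g : ℝ → ℝ := fun t => Real.exp (-(3 * lam * t ^ 2) / π ^ 2)
      - ((1 - lam) + lam * Real.cos t) with hgdef
  have hg0 : g 0 = 0 := by simp [hgdef]
  -- derivative of g
  have hgd : ∀ t : ℝ, HasDerivAt g
      (Real.exp (-(3 * lam * t ^ 2) / π ^ 2) * (-(3 * lam * (2 * t)) / π ^ 2)
        + lam * Real.sin t) t := by
    intro t
    have h1 : HasDerivAt (fun t : ℝ => -(3 * lam * t ^ 2) / π ^ 2)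
        (-(3 * lam * (2 * t)) / π ^ 2) t := by
      have := (((hasDerivAt_pow 2 t).const_mul (3 * lam)).neg).div_const (π ^ 2)
      simpa using this
    have h2 := h1.exp
    have h3 : HasDerivAt (fun t : ℝ => (1 - lam) + lam * Real.cos t)
        (lam * (-Real.sin t)) t :=
      ((Real.hasDerivAt_cos t).const_mul lam).const_add (1 - lam)
    have := h2.sub h3
    refine this.congr_deriv ?_
    ring
  have hgcont : Continuous g := by
    apply Continuous.sub
    · exact Real.continuous_exp.comp (by continuity)
    · continuity
  -- zeros of the original function are zeros of g
  have hzero : ∀ t ∈ Set.Ioc (0:ℝ) π,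
      Real.exp (-(3 * lam * t ^ 2) / (2 * π ^ 2)) -
        Real.sqrt ((1 - lam) + lam * Real.cos t) = 0 → g t = 0 := by
    intro t ht h
    have hA : (0:ℝ) ≤ (1 - lam) + lam * Real.cos t := by
      nlinarith [Real.neg_one_le_cos t]
    have heq : Real.sqrt ((1 - lam) + lam * Real.cos t)
        = Real.exp (-(3 * lam * t ^ 2) / (2 * π ^ 2)) := by linarith
    have hsq : (1 - lam) + lam * Real.cos t
        = Real.exp (-(3 * lam * t ^ 2) / (2 * π ^ 2)) ^ 2 := by
      rw [← heq, Real.sq_sqrt hA]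
    have hexp2 : Real.exp (-(3 * lam * t ^ 2) / (2 * π ^ 2)) ^ 2
        = Real.exp (-(3 * lam * t ^ 2) / π ^ 2) := by
      rw [sq, ← Real.exp_add]
      congr 1
      field_simp
      ring
    simp only [hgdef]
    rw [hsq, hexp2]
    ring
  -- the auxiliary strictly decreasing function R
  set R : ℝ → ℝ := fun t => Real.log (Real.sin t) - Real.log t + 3 * lam * t ^ 2 / π ^ 2
    with hRdef
  have hRd : ∀ t ∈ Set.Ioo (0:ℝ) π, HasDerivAt R
      (Real.cos t / Real.sin t - t⁻¹ + 3 * lam * (2 * t) / π ^ 2) t := by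
    intro t ht
    have hsin : 0 < Real.sin t := Real.sin_pos_of_pos_of_lt_pi ht.1 ht.2
    have h1 : HasDerivAt (fun t : ℝ => Real.log (Real.sin t))
        (Real.cos t / Real.sin t) t := (Real.hasDerivAt_sin t).log (ne_of_gt hsin)
    have h2 : HasDerivAt (fun t : ℝ => Real.log t) t⁻¹ t :=
      Real.hasDerivAt_log (ne_of_gt ht.1)
    have h3 : HasDerivAt (fun t : ℝ => 3 * lam * t ^ 2 / π ^ 2)
        (3 * lam * (2 * t) / π ^ 2) t := by
      have := ((hasDerivAt_pow 2 t).const_mul (3 * lam)).div_const (π ^ 2)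
      simpa using this
    exact (h1.sub h2).add h3
  have hRanti : StrictAntiOn R (Set.Ioo 0 π) := by
    apply strictAntiOn_of_deriv_neg (convex_Ioo 0 π)
    · intro t ht
      exact (hRd t ht).differentiableAt.continuousAt.continuousWithinAt
    · intro t ht
      rw [interior_Ioo] at ht
      rw [(hRd t ht).deriv]
      have hsin : 0 < Real.sin t := Real.sin_pos_of_pos_of_lt_pi ht.1 ht.2
      have hkey := aux_trig ht.1 ht.2
      have e1 : Real.cos t / Real.sin t ≤ (1 - t ^ 2 / 3) / t := by
        rw [div_le_div_iff₀ hsin ht.1]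
        nlinarith
      have ht0 : t ≠ 0 := ne_of_gt ht.1
      have e3 : (1 - t ^ 2 / 3) / t = t⁻¹ - t / 3 := by
        field_simp
      have e2 : 3 * lam * (2 * t) / π ^ 2 < t / 3 := by
        rw [div_lt_iff₀ hπ2]
        have h9 : (9:ℝ) < π ^ 2 := by
          nlinarith [Real.pi_gt_d6]
        nlinarith [ht.1]
      rw [e3] at e1
      linarith
  -- a point where g' vanishes pins down the value of R
  have hRval : ∀ x ∈ Set.Ioo (0:ℝ) π, deriv g x = 0 → R x = Real.log (6 / π ^ 2) := by
    intro x hx hdx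
    have hsin : 0 < Real.sin x := Real.sin_pos_of_pos_of_lt_pi hx.1 hx.2
    have hE : 0 < Real.exp (-(3 * lam * x ^ 2) / π ^ 2) := Real.exp_pos _
    have hx0 := hx.1
    have hde := (hgd x).deriv
    rw [hdx] at hde
    have hsineq : Real.sin x = 6 * x / π ^ 2 * Real.exp (-(3 * lam * x ^ 2) / π ^ 2) := by
      have hl : lam * Real.sin x
          = lam * (6 * x / π ^ 2 * Real.exp (-(3 * lam * x ^ 2) / π ^ 2)) := by
        field_simp at hde ⊢
        nlinarith [hde]
      exact mul_left_cancel₀ (ne_of_gt hlam0) hl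
    have hpos : 0 < 6 * x / π ^ 2 := by positivity
    simp only [hRdef]
    rw [hsineq, Real.log_mul (ne_of_gt hpos) (ne_of_gt hE), Real.log_exp,
      show 6 * x / π ^ 2 = 6 / π ^ 2 * x by ring,
      Real.log_mul (by positivity) (ne_of_gt hx0)]
    ring
  -- main argument
  have key : ∀ a b : ℝ, a ∈ Set.Ioc (0:ℝ) π → b ∈ Set.Ioc (0:ℝ) π →
      g a = 0 → g b = 0 → a < b → False := by
    intro a b ha hb hga hgb hab
    obtain ⟨x, hx, hdx⟩ := exists_deriv_eq_zero ha.1 hgcont.continuousOn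
      (by rw [hg0, hga])
    obtain ⟨y, hy, hdy⟩ := exists_deriv_eq_zero hab hgcont.continuousOn
      (by rw [hga, hgb])
    have hxm : x ∈ Set.Ioo (0:ℝ) π := ⟨hx.1, lt_of_lt_of_le (hx.2.trans hab) hb.2⟩
    have hym : y ∈ Set.Ioo (0:ℝ) π := ⟨lt_trans ha.1 hy.1, lt_of_lt_of_le hy.2 hb.2⟩
    have hxy : x < y := lt_trans hx.2 hy.1
    have h1 := hRval x hxm hdx
    have h2 := hRval y hym hdy
    have := hRanti hxm hym hxy
    rw [h1, h2] at this
    exact lt_irrefl _ this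
  intro t₁ h₁ t₂ h₂
  simp only [Set.mem_setOf_eq, Set.mem_sep_iff] at h₁ h₂
  by_contra hne
  rcases lt_or_gt_of_ne hne with h | h
  · exact key t₁ t₂ h₁.1 h₂.1 (hzero t₁ h₁.1 h₁.2) (hzero t₂ h₂.1 h₂.2) h
  · exact key t₂ t₁ h₂.1 h₁.1 (hzero t₂ h₂.1 h₂.2) (hzero t₁ h₁.1 h₁.2) h
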